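/- Assume that for all natural numbers e ≥ 1 and k with k < 2^(e-1), either f(2^e+2k+1) = f(2k+1) or ν( f(2^e+2k+1) − f(2k+1) ) ≥ e − 2·lg(k+3) + 2·ν(k+1). Let e : ℕ → ℕ be a strictly increasing sequence with e(0) = 0 such that the sequence i ↦ e(i+1) − 2·e(i) (as integers) tends to +∞, and let x ∈ ℤ₂ be the sum of the convergent series ∑_{i=0}^∞ 2^(e(i)). Then the sequence j ↦ f(x_j), viewed in ℚ₂, is a Cauchy sequence. -/

import Mathlib

private lemma cauchy_of_consec {p : ℕ} [Fact p.Prime] {u : ℕ → ℚ_[p]}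
    (h : ∀ ε : ℝ, 0 < ε → ∃ J : ℕ, ∀ j ≥ J, ‖u (j + 1) - u j‖ < ε) : CauchySeq u := by
  rw [Metric.cauchySeq_iff']
  intro ε hε
  obtain ⟨J, hJ⟩ := h ε hε
  refine ⟨J, fun n hn => ?_⟩
  induction n, hn using Nat.le_induction with
  | base => simpa using hε
  | succ n hn ih =>
    rw [dist_eq_norm] at ih ⊢
    have hsplit : u (n + 1) - u J = (u (n + 1) - u n) + (u n - u J) := by ring
    rw [hsplit]
    exact lt_of_le_of_lt (Padic.nonarchimedean _ _) (max_lt (hJ n hn) ih)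

private lemma sum_range_two_pow (j : ℕ) : ∑ m ∈ Finset.range j, 2 ^ m = 2 ^ j - 1 := by
  induction j with
  | zero => simp
  | succ j ih =>
    rw [Finset.sum_range_succ, ih, pow_succ]
    have : 1 ≤ 2 ^ j := Nat.one_le_two_pow
    omega

theorem stmt_5
    (f : ℕ → ℚ) (hf : ∀ n : ℕ, f n = ∑ i ∈ Finset.range (n + 1), ((n.choose i : ℚ))⁻¹)
    (hconj : ∀ e k : ℕ, 1 ≤ e → k < 2 ^ (e - 1) →
      f (2 ^ e + 2 * k + 1) = f (2 * k + 1) ∨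
        padicValRat 2 (f (2 ^ e + 2 * k + 1) - f (2 * k + 1)) ≥
          (e : ℤ) - 2 * (Nat.log 2 (k + 3) : ℤ) + 2 * (padicValNat 2 (k + 1) : ℤ))
    (e : ℕ → ℕ) (hmono : StrictMono e) (he0 : e 0 = 0)
    (hgap : Filter.Tendsto (fun i : ℕ => (e (i + 1) : ℤ) - 2 * (e i : ℤ))
      Filter.atTop Filter.atTop)
    (x : ℤ_[2]) (hx : x = ∑' i : ℕ, (2 : ℤ_[2]) ^ (e i)) :
    CauchySeq (fun j : ℕ => ((f (x.appr j) : ℚ) : ℚ_[2])) := by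
  classical
  set S : ℕ → Finset ℕ := fun j => (Finset.range j).filter (fun i => e i < j) with hSdef
  set a : ℕ → ℕ := fun j => ∑ i ∈ S j, 2 ^ (e i) with hadef
  have hSmem : ∀ j i, i ∈ S j ↔ e i < j := by
    intro j i
    simp only [hSdef, Finset.mem_filter, Finset.mem_range]
    exact ⟨fun h => h.2, fun h => ⟨lt_of_le_of_lt (hmono.le_apply (x := i)) h, h⟩⟩
  -- a j < 2 ^ j
  have ha_lt : ∀ j, a j < 2 ^ j := by
    intro j
    have h1 : a j = ∑ m ∈ (S j).image e, 2 ^ m := by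
      rw [Finset.sum_image (fun i _ i' _ h => hmono.injective h)]
    have h2 : (S j).image e ⊆ Finset.range j := by
      intro m hm
      obtain ⟨i, hi, rfl⟩ := Finset.mem_image.mp hm
      exact Finset.mem_range.mpr ((hSmem j i).mp hi)
    calc a j = ∑ m ∈ (S j).image e, 2 ^ m := h1
      _ ≤ ∑ m ∈ Finset.range j, 2 ^ m :=
          Finset.sum_le_sum_of_subset h2
      _ = 2 ^ j - 1 := sum_range_two_pow j
      _ < 2 ^ j := by have : 1 ≤ 2 ^ j := Nat.one_le_two_pow; omega
  -- summability
  have hnormpow : ∀ m : ℕ, ‖(2 : ℤ_[2]) ^ m‖ = (2 : ℝ) ^ (-(m : ℤ)) := by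
    intro m
    have := PadicInt.norm_p_pow (p := 2) m
    simpa using this
  have hsummable : Summable (fun i : ℕ => (2 : ℤ_[2]) ^ (e i)) := by
    apply Summable.of_norm
    have hb : ∀ i : ℕ, ‖(2 : ℤ_[2]) ^ (e i)‖ ≤ (1 / 2 : ℝ) ^ i := by
      intro i
      rw [hnormpow]
      have h2 : ((1 : ℝ) / 2) ^ i = (2 : ℝ) ^ (-(i : ℤ)) := by
        rw [zpow_neg, zpow_natCast, one_div, inv_pow]
      rw [h2]
      apply zpow_le_zpow_right₀ (by norm_num)
      have := hmono.le_apply (x := i)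
      omega
    exact Summable.of_nonneg_of_le (fun i => norm_nonneg _) hb
      (summable_geometric_of_lt_one (by norm_num) (by norm_num))
  -- norm bound on x - a j
  have hx_sub : ∀ j, ‖x - ((a j : ℕ) : ℤ_[2])‖ ≤ (2 : ℝ) ^ (-(j : ℤ)) := by
    intro j
    have hca : ((a j : ℕ) : ℤ_[2]) = ∑ i ∈ S j, (2 : ℤ_[2]) ^ (e i) := by
      push_cast [hadef]
      rfl
    have hsplit := hsummable.sum_add_tsum_subtype_compl (S j)
    have hxa : x - ((a j : ℕ) : ℤ_[2])
        = ∑' (i : {i : ℕ // i ∉ S j}), (2 : ℤ_[2]) ^ (e i.1) := by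
      rw [hca, hx, ← hsplit]; ring
    rw [hxa]
    apply IsUltrametricDist.norm_tsum_le_of_forall_le_of_nonneg (by positivity)
    rintro ⟨i, hi⟩
    have hei : j ≤ e i := by
      by_contra hlt
      exact hi ((hSmem j i).mpr (lt_of_not_ge hlt))
    show ‖(2 : ℤ_[2]) ^ (e i)‖ ≤ (2 : ℝ) ^ (-(j : ℤ))
    rw [hnormpow]
    apply zpow_le_zpow_right₀ (by norm_num)
    omega
  -- appr x j = a j
  have happr : ∀ j, x.appr j = a j := by
    intro j
    have h2 : ‖x - ((x.appr j : ℕ) : ℤ_[2])‖ ≤ (2 : ℝ) ^ (-(j : ℤ)) := by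
      rw [show ((-(j : ℤ))) = (-(j : ℕ) : ℤ) by simp]
      exact (PadicInt.norm_le_pow_iff_mem_span_pow _ j).mpr (PadicInt.appr_spec j x)
    have h3 : ‖((a j : ℤ) : ℤ_[2]) - ((x.appr j : ℤ) : ℤ_[2])‖ ≤ (2 : ℝ) ^ (-(j : ℤ)) := by
      have heq : ((a j : ℤ) : ℤ_[2]) - ((x.appr j : ℤ) : ℤ_[2])
          = (x - ((x.appr j : ℕ) : ℤ_[2])) + (-(x - ((a j : ℕ) : ℤ_[2]))) := by
        push_cast
        ring
      rw [heq]
      refine le_trans (IsUltrametricDist.norm_add_le_max _ _) (max_le h2 ?_)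
      rw [norm_neg]
      exact hx_sub j
    have h4 : ((2 : ℤ) ^ j) ∣ ((a j : ℤ) - (x.appr j : ℤ)) := by
      have h := (PadicInt.norm_int_le_pow_iff_dvd (p := 2)
        (k := (a j : ℤ) - (x.appr j : ℤ)) (n := j)).mp (by push_cast; convert h3 using 2; push_cast; rfl)
      exact_mod_cast h
    have h5 : (a j : ℤ) - (x.appr j : ℤ) = 0 := by
      apply Int.eq_zero_of_abs_lt_dvd h4
      have hb1 : (a j : ℤ) < 2 ^ j := by exact_mod_cast ha_lt j
      have hb2 : ((x.appr j : ℕ) : ℤ) < 2 ^ j := by exact_mod_cast x.appr_lt j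
      rw [abs_lt]
      omega
    omega
  -- step lemmas
  have hstep_eq : ∀ j, (∀ i, e i ≠ j) → a (j + 1) = a j := by
    intro j hne
    have hS' : S (j + 1) = S j := by
      ext i
      rw [hSmem, hSmem]
      have := hne i
      omega
    simp only [hadef, hS']
  have hstep_add : ∀ j i, e i = j → a (j + 1) = 2 ^ j + a j := by
    intro j i hij
    have hi_not : i ∉ S j := by rw [hSmem]; omega
    have hins : S (j + 1) = insert i (S j) := by
      ext m
      rw [Finset.mem_insert, hSmem, hSmem]
      constructor
      · intro hm
        rcases Nat.lt_or_ge (e m) j with h | h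
        · exact Or.inr h
        · exact Or.inl (hmono.injective (by omega))
      · rintro (rfl | hm) <;> omega
    simp only [hadef]
    rw [hins, Finset.sum_insert hi_not, hij]
  -- a j is odd for j ≥ 1
  have hodd : ∀ j, 1 ≤ j → a j % 2 = 1 := by
    intro j hj
    have h0 : (0 : ℕ) ∈ S j := by rw [hSmem, he0]; omega
    have hsplit := Finset.sum_erase_add (S j) (fun i => 2 ^ (e i)) h0
    have heven : 2 ∣ ∑ i ∈ (S j).erase 0, 2 ^ (e i) := by
      apply Finset.dvd_sum
      intro i hi
      have hi0 : i ≠ 0 := Finset.ne_of_mem_erase hi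
      have h1 : 1 ≤ e i := by
        have := hmono.le_apply (x := i)
        omega
      exact dvd_pow_self 2 (by omega)
    have ha_eq : a j = ∑ i ∈ (S j).erase 0, 2 ^ (e i) + 1 := by
      have h1 := hsplit
      simp only [he0, pow_zero] at h1
      rw [hadef]
      simp only
      omega
    obtain ⟨c, hc⟩ := heven
    omega
  -- a (e (i'+1)) < 2 ^ (e i' + 1)
  have hmaj : ∀ i' : ℕ, a (e (i' + 1)) < 2 ^ (e i' + 1) := by
    intro i'
    have hS' : S (e (i' + 1)) = S (e i' + 1) := by
      ext m
      rw [hSmem, hSmem]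
      constructor
      · intro h
        have : m < i' + 1 := hmono.lt_iff_lt.mp h
        have : m ≤ i' := by omega
        have := hmono.le_iff_le.mpr this
        omega
      · intro h
        have hm : e m ≤ e i' := by omega
        have : m ≤ i' := hmono.le_iff_le.mp hm
        exact hmono.lt_iff_lt.mpr (by omega)
    have : a (e (i' + 1)) = a (e i' + 1) := by simp only [hadef, hS']
    rw [this]
    exact ha_lt (e i' + 1)
  -- main estimate
  apply cauchy_of_consec
  intro ε hε
  obtain ⟨M, hM⟩ := exists_pow_lt_of_lt_one hε (by norm_num : (1 / 2 : ℝ) < 1)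
  have hMpow : (2 : ℝ) ^ (-(M : ℤ)) < ε := by
    have : ((1 : ℝ) / 2) ^ M = (2 : ℝ) ^ (-(M : ℤ)) := by
      rw [zpow_neg, zpow_natCast, one_div, inv_pow]
    rwa [this] at hM
  obtain ⟨I, hI⟩ := Filter.eventually_atTop.mp (hgap.eventually_ge_atTop ((M : ℤ) + 4))
  refine ⟨e I + 1, fun j hj => ?_⟩
  by_cases hcase : ∃ i, e i = j
  · obtain ⟨i, hij⟩ := hcase
    -- i ≥ I + 1
    have hiI : I < i := by
      by_contra hle
      have : e i ≤ e I := hmono.monotone (by omega)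
      omega
    obtain ⟨i', rfl⟩ : ∃ i', i = i' + 1 := ⟨i - 1, by omega⟩
    have hi'I : I ≤ i' := by omega
    have hj1 : 1 ≤ j := by omega
    -- a j = 2k + 1
    set k : ℕ := a j / 2 with hk
    have hodd_j := hodd j hj1
    have hak : a j = 2 * k + 1 := by omega
    have hei'_lt : e i' + 1 ≤ j := by
      have := hmono (lt_add_one i')
      omega
    have haj_lt : a j < 2 ^ (e i' + 1) := by
      rw [← hij]
      exact hmaj i'
    have hk_lt : k < 2 ^ (e i') := by
      have : 2 ^ (e i' + 1) = 2 * 2 ^ (e i') := by rw [pow_succ]; ring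
      omega
    have hk_lt' : k < 2 ^ (j - 1) := by
      calc k < 2 ^ (e i') := hk_lt
        _ ≤ 2 ^ (j - 1) := Nat.pow_le_pow_right (by norm_num) (by omega)
    -- appr values
    have hap1 : x.appr (j + 1) = 2 ^ j + 2 * k + 1 := by
      rw [happr, hstep_add j (i' + 1) hij, hak]
      omega
    have hap0 : x.appr j = 2 * k + 1 := by rw [happr, hak]
    -- conjecture
    rcases hconj j k hj1 hk_lt' with hzero | hval
    · simp only [hap1, hap0, hzero, sub_self, norm_zero]
      exact hε
    · set d : ℚ := f (2 ^ j + 2 * k + 1) - f (2 * k + 1) with hd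
      have hdiff : ((f (x.appr (j + 1)) : ℚ) : ℚ_[2]) - ((f (x.appr j) : ℚ) : ℚ_[2])
          = ((d : ℚ) : ℚ_[2]) := by
        rw [hap1, hap0, hd]
        push_cast
        ring
      rw [hdiff]
      by_cases hd0 : d = 0
      · simp [hd0]
        exact hε
      · -- valuation bound
        have hlog : (Nat.log 2 (k + 3) : ℤ) ≤ (e i' : ℤ) + 2 := by
          have h1 : k + 3 ≤ 2 ^ (e i' + 2) := by
            have : 2 ^ (e i' + 2) = 4 * 2 ^ (e i') := by rw [pow_add]; ring
            omega
          have h2 : Nat.log 2 (k + 3) ≤ Nat.log 2 (2 ^ (e i' + 2)) :=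
            Nat.log_mono_right h1
          rw [Nat.log_pow (by norm_num)] at h2
          exact_mod_cast h2
        have hval2 : (M : ℤ) ≤ padicValRat 2 d := by
          have hgapI := hI i' hi'I
          have hnn : (0 : ℤ) ≤ (padicValNat 2 (k + 1) : ℤ) := Int.natCast_nonneg _
          have hje : (j : ℤ) = (e (i' + 1) : ℤ) := by exact_mod_cast hij.symm
          omega
        -- norm bound
        have hnorm : ‖((d : ℚ) : ℚ_[2])‖ ≤ (2 : ℝ) ^ (-(M : ℤ)) := by
          rw [Padic.eq_padicNorm, padicNorm.eq_zpow_of_nonzero hd0]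
          push_cast
          apply zpow_le_zpow_right₀ (by norm_num)
          omega
        exact lt_of_le_of_lt hnorm hMpow
  · push_neg at hcase
    have : x.appr (j + 1) = x.appr j := by
      rw [happr, happr, hstep_eq j hcase]
    rw [this]
    simpa using hε
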